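/- Let 0 < c₁ ≤ c₂ be constants. Let A : [0,∞) → [0,∞) be differentiable with A(0) = 0 and c₁ t ≤ A′(t) ≤ c₂ t for all t ≥ 0, and let (u_n)_{n ≥ 1} be an increasing sequence with u₁ ≥ c₁ and c₁ ≤ u_{n+1} − u_n ≤ c₂ for all n ≥ 1. Set v_n := A(u_n), v_{n+1/2} := (v_n + v_{n+1})/2, and V_n := [v_{n−1/2}, v_{n+1/2}] for n ≥ 2. Then there exist constants C₂ ≥ C₁ > 0 such that for every n ≥ 2: C₁ n² ≤ v_n ≤ C₂ n²; C₁ n ≤ v_{n+1/2} − v_{n−1/2} ≤ C₂ n; and for every α ∈ V_n: C₁ v_n ≤ α ≤ C₂ v_n and |v_n − α| = min_{m ≥ 1} |v_m − α|. -/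

import Mathlib

open Set

private lemma stmt15_key (c₁ c₂ : ℝ) (hc₁ : 0 < c₁)
    (A A' : ℝ → ℝ)
    (hderiv : ∀ t ∈ Ici (0 : ℝ), HasDerivWithinAt A (A' t) (Ici 0) t)
    (hA' : ∀ t : ℝ, 0 ≤ t → c₁ * t ≤ A' t ∧ A' t ≤ c₂ * t) :
    ∀ s t : ℝ, 0 ≤ s → s ≤ t →
      c₁/2*(t^2-s^2) ≤ A t - A s ∧ A t - A s ≤ c₂/2*(t^2-s^2) := by
    have hd1 : ∀ x ∈ Ici (0:ℝ), HasDerivWithinAt (fun x => A x - c₁/2*x^2)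
        (A' x - c₁ * x) (Ici 0) x := by
      intro x hx
      have h := (hderiv x hx).sub (((hasDerivAt_pow 2 x).const_mul (c₁/2)).hasDerivWithinAt)
      exact h.congr_deriv (by push_cast; ring)
    have hd2 : ∀ x ∈ Ici (0:ℝ), HasDerivWithinAt (fun x => c₂/2*x^2 - A x)
        (c₂ * x - A' x) (Ici 0) x := by
      intro x hx
      have h := (((hasDerivAt_pow 2 x).const_mul (c₂/2)).hasDerivWithinAt).sub (hderiv x hx)
      exact h.congr_deriv (by push_cast; ring)
    have hm1 : MonotoneOn (fun x => A x - c₁/2*x^2) (Ici 0) :=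
      monotoneOn_of_hasDerivWithinAt_nonneg (convex_Ici 0)
        (fun x hx => (hd1 x hx).continuousWithinAt)
        (fun x hx => (hd1 x (interior_subset hx)).mono interior_subset)
        (fun x hx => by
          have hx' : 0 ≤ x := le_of_lt (by simpa [interior_Ici] using hx)
          have := (hA' x hx').1; linarith)
    have hm2 : MonotoneOn (fun x => c₂/2*x^2 - A x) (Ici 0) :=
      monotoneOn_of_hasDerivWithinAt_nonneg (convex_Ici 0)
        (fun x hx => (hd2 x hx).continuousWithinAt)
        (fun x hx => (hd2 x (interior_subset hx)).mono interior_subset)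
        (fun x hx => by
          have hx' : 0 ≤ x := le_of_lt (by simpa [interior_Ici] using hx)
          have := (hA' x hx').2; linarith)
    intro s t hs hst
    have h1 := hm1 (mem_Ici.mpr hs) (mem_Ici.mpr (hs.trans hst)) hst
    have h2 := hm2 (mem_Ici.mpr hs) (mem_Ici.mpr (hs.trans hst)) hst
    simp only at h1 h2
    constructor <;> linarith

set_option maxHeartbeats 1600000 in
/-- Lemma 8.1 (properties of the intervals `V_n`): with `A(t) ≍ t²` (via `A' (t) ≍ t`,
`A(0) = 0`) and comparably spaced points `u_n` (`u₁ ≥ c₁`, gaps in `[c₁, c₂]`), the images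
`v_n = A(u_n)` satisfy `v_n ≍ n²`, the intervals `V_n` between consecutive midpoints have
length `≍ n`, and for `α ∈ V_n` one has `α ≍ v_n` and `v_n` is the closest of the `v_m`. -/
theorem stmt15 (c₁ c₂ : ℝ) (hc₁ : 0 < c₁) (hc : c₁ ≤ c₂)
    (A A' : ℝ → ℝ) (hA0 : A 0 = 0)
    (hrange : ∀ t : ℝ, 0 ≤ t → 0 ≤ A t)
    (hderiv : ∀ t ∈ Ici (0 : ℝ), HasDerivWithinAt A (A' t) (Ici 0) t)
    (hA' : ∀ t : ℝ, 0 ≤ t → c₁ * t ≤ A' t ∧ A' t ≤ c₂ * t)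
    (u : ℕ → ℝ) (hu1 : c₁ ≤ u 1)
    (hgap : ∀ n : ℕ, 1 ≤ n → c₁ ≤ u (n + 1) - u n ∧ u (n + 1) - u n ≤ c₂) :
    ∃ C₁ C₂ : ℝ, 0 < C₁ ∧ C₁ ≤ C₂ ∧ ∀ n : ℕ, 2 ≤ n →
      (C₁ * (n : ℝ) ^ 2 ≤ A (u n) ∧ A (u n) ≤ C₂ * (n : ℝ) ^ 2) ∧
      (C₁ * (n : ℝ) ≤ (A (u n) + A (u (n + 1))) / 2 - (A (u (n - 1)) + A (u n)) / 2 ∧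
        (A (u n) + A (u (n + 1))) / 2 - (A (u (n - 1)) + A (u n)) / 2 ≤ C₂ * (n : ℝ)) ∧
      ∀ α ∈ Icc ((A (u (n - 1)) + A (u n)) / 2) ((A (u n) + A (u (n + 1))) / 2),
        (C₁ * A (u n) ≤ α ∧ α ≤ C₂ * A (u n)) ∧
        ∀ m : ℕ, 1 ≤ m → |A (u n) - α| ≤ |A (u m) - α| := by
  have hc₂pos : 0 < c₂ := hc₁.trans_le hc
  have hu1pos : 0 < u 1 := hc₁.trans_le hu1
  have key := stmt15_key c₁ c₂ hc₁ A A' hderiv hA'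
  obtain ⟨K, hKu1, hc₂K, hcK, hKpos⟩ :
      ∃ K : ℝ, u 1 ≤ K ∧ c₂ ≤ K ∧ c₁ ≤ K ∧ 0 < K :=
    ⟨u 1 + c₂, by linarith, by linarith, by linarith, by linarith⟩
  -- bounds `c₁ n ≤ u n ≤ K n`
  have hub : ∀ n : ℕ, 1 ≤ n → c₁ * n ≤ u n ∧ u n ≤ K * n := by
    intro n hn
    induction n with
    | zero => omega
    | succ m ih =>
      rcases Nat.eq_or_lt_of_le hn with h1 | h1
      · have : m = 0 := by omega
        subst this
        constructor
        · push_cast; linarith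
        · push_cast; linarith
      · have hm : 1 ≤ m := by omega
        obtain ⟨hl, hr⟩ := ih hm
        obtain ⟨gl, gr⟩ := hgap m hm
        constructor
        · push_cast; linarith
        · push_cast; linarith
  have hu0 : ∀ n : ℕ, 1 ≤ n → 0 ≤ u n := by
    intro n hn
    have h1 := (hub n hn).1
    have h2 : (0:ℝ) ≤ c₁ * n := by positivity
    linarith
  -- monotonicity of `u`
  have humono : ∀ m n : ℕ, 1 ≤ m → m ≤ n → u m ≤ u n := by
    intro m n hm hmn
    induction n, hmn using Nat.le_induction with
    | base => exact le_refl _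
    | succ n hn ih =>
      have h1 : 1 ≤ n := le_trans hm hn
      have := (hgap n h1).1
      linarith
  -- monotonicity of `v`
  have hvmono : ∀ m n : ℕ, 1 ≤ m → m ≤ n → A (u m) ≤ A (u n) := by
    intro m n hm hmn
    have h := (key (u m) (u n) (hu0 m hm) (humono m n hm hmn)).1
    have hsq : (u m)^2 ≤ (u n)^2 := pow_le_pow_left₀ (hu0 m hm) (humono m n hm hmn) 2
    have h2 := mul_nonneg (le_of_lt (half_pos hc₁)) (sub_nonneg.mpr hsq)
    linarith
  -- bounds on `v n = A (u n)`
  have hv : ∀ n : ℕ, 1 ≤ n → c₁^3/2 * (n:ℝ)^2 ≤ A (u n) ∧ A (u n) ≤ c₂*K^2/2 * (n:ℝ)^2 := by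
    intro n hn
    obtain ⟨hl, hr⟩ := hub n hn
    have h0 := hu0 n hn
    obtain ⟨k1, k2⟩ := key 0 (u n) le_rfl h0
    rw [hA0] at k1 k2
    have hcn : (0:ℝ) ≤ c₁ * n := by positivity
    have hsq1 : (c₁*(n:ℝ))^2 ≤ (u n)^2 := pow_le_pow_left₀ hcn hl 2
    have hsq2 : (u n)^2 ≤ (K*(n:ℝ))^2 := pow_le_pow_left₀ h0 hr 2
    constructor
    · have h := mul_le_mul_of_nonneg_left hsq1 (by positivity : (0:ℝ) ≤ c₁/2)
      linarith
    · have h := mul_le_mul_of_nonneg_left hsq2 (by positivity : (0:ℝ) ≤ c₂/2)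
      linarith
  have hKey1 : c₁^3 ≤ c₂ * K^2 := by
    have e1 : c₁*c₁ ≤ K*K := mul_le_mul hcK hcK hc₁.le hKpos.le
    have e2 : c₁*(c₁*c₁) ≤ c₂*(K*K) := mul_le_mul hc e1 (by positivity) hc₂pos.le
    linarith [e2]
  refine ⟨min (c₁^3/2) (c₁^3/(4*c₂*K^2)), max (c₂*K^2/2) (max (2*c₂^2*K) (4*c₂*K^2/c₁^3)),
    ?_, ?_, ?_⟩
  · have h1 : 0 < c₁^3/2 := by positivity
    have h2 : 0 < c₁^3/(4*c₂*K^2) := by positivity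
    exact lt_min h1 h2
  · refine le_trans (min_le_left _ _) (le_trans ?_ (le_max_left _ _))
    linarith
  intro n hn
  obtain ⟨k, rfl⟩ : ∃ k, n = k + 2 := ⟨n - 2, by omega⟩
  have hsub : k + 2 - 1 = k + 1 := rfl
  rw [hsub]
  rw [show k + 2 + 1 = k + 3 from rfl]
  have hk2 : (1:ℕ) ≤ k + 2 := by omega
  have hk1 : (1:ℕ) ≤ k + 1 := by omega
  have hk3 : (1:ℕ) ≤ k + 3 := by omega
  obtain ⟨N, hNdef⟩ : ∃ N : ℝ, N = (k:ℝ) + 2 := ⟨_, rfl⟩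
  have hNcast : ((k+2 : ℕ) : ℝ) = N := by rw [hNdef]; push_cast; ring
  have hN2 : (2:ℝ) ≤ N := by rw [hNdef]; have : (0:ℝ) ≤ (k:ℝ) := Nat.cast_nonneg k; linarith
  have hN0 : (0:ℝ) ≤ N := by linarith
  obtain ⟨hv2l, hv2r⟩ := hv (k+2) hk2
  obtain ⟨hv1l, hv1r⟩ := hv (k+1) hk1
  obtain ⟨hv3l, hv3r⟩ := hv (k+3) hk3
  rw [hNcast] at hv2l hv2r
  have hc1cast : ((k+1 : ℕ) : ℝ) = N - 1 := by rw [hNdef]; push_cast; ring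
  have hc3cast : ((k+3 : ℕ) : ℝ) = N + 1 := by rw [hNdef]; push_cast; ring
  rw [hc1cast] at hv1l hv1r
  rw [hc3cast] at hv3l hv3r
  have hA2 : 0 ≤ A (u (k+2)) := hrange _ (hu0 _ hk2)
  have hmono12 := hvmono (k+1) (k+2) hk1 (by omega)
  have hmono23 := hvmono (k+2) (k+3) hk2 (by omega)
  refine ⟨?_, ?_, ?_⟩
  -- bounds on v_n
  · rw [hNcast]
    constructor
    · have h := mul_le_mul_of_nonneg_right (min_le_left (c₁^3/2) (c₁^3/(4*c₂*K^2)))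
        (by positivity : (0:ℝ) ≤ N^2)
      linarith
    · have h := mul_le_mul_of_nonneg_right
        (le_max_left (c₂*K^2/2) (max (2*c₂^2*K) (4*c₂*K^2/c₁^3)))
        (by positivity : (0:ℝ) ≤ N^2)
      linarith
  -- length of V_n
  · have hmid : (A (u (k+2)) + A (u (k+3))) / 2 - (A (u (k+1)) + A (u (k+2))) / 2
        = (A (u (k+3)) - A (u (k+1))) / 2 := by ring
    rw [hmid, hNcast]
    obtain ⟨kl, kr⟩ := key (u (k+1)) (u (k+3)) (hu0 _ hk1) (humono _ _ hk1 (by omega))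
    obtain ⟨g1l, g1r⟩ := hgap (k+1) hk1
    obtain ⟨g2l, g2r⟩ := hgap (k+2) hk2
    rw [show k+1+1 = k+2 from rfl] at g1l g1r
    rw [show k+2+1 = k+3 from rfl] at g2l g2r
    have hgapsum_l : 2*c₁ ≤ u (k+3) - u (k+1) := by linarith
    have hgapsum_r : u (k+3) - u (k+1) ≤ 2*c₂ := by linarith
    obtain ⟨hu1l, hu1r⟩ := hub (k+1) hk1
    obtain ⟨hu3l, hu3r⟩ := hub (k+3) hk3
    rw [hc1cast] at hu1l hu1r
    rw [hc3cast] at hu3l hu3r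
    have hmono13 : u (k+1) ≤ u (k+3) := humono (k+1) (k+3) hk1 (by omega)
    have hN1 : (1:ℝ) ≤ N - 1 := by linarith
    have hcc : c₁ ≤ c₁ * (N-1) := by
      have := mul_le_mul_of_nonneg_left hN1 hc₁.le
      linarith
    have hsum_l : c₁ * N ≤ u (k+3) + u (k+1) := by linarith
    have hsum_r : u (k+3) + u (k+1) ≤ 4*K*N := by
      have e1 : K * (N+1) ≤ K * (2*N) :=
        mul_le_mul_of_nonneg_left (by linarith) hKpos.le
      have e2 : K * (N-1) ≤ K * N :=
        mul_le_mul_of_nonneg_left (by linarith) hKpos.le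
      have e3 : K * N ≤ K * (2 * N) := mul_le_mul_of_nonneg_left (by linarith) hKpos.le
      linarith
    have hfact : (u (k+3))^2 - (u (k+1))^2
        = (u (k+3) - u (k+1)) * (u (k+3) + u (k+1)) := by ring
    have hpos13 : 0 ≤ u (k+3) + u (k+1) := by
      have := hu0 (k+1) hk1; have := hu0 (k+3) hk3; linarith
    have hprod_l : (2*c₁) * (c₁*N) ≤ (u (k+3) - u (k+1)) * (u (k+3) + u (k+1)) :=
      mul_le_mul hgapsum_l hsum_l (by positivity) (by linarith)
    have hprod_r : (u (k+3) - u (k+1)) * (u (k+3) + u (k+1)) ≤ (2*c₂) * (4*K*N) :=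
      mul_le_mul hgapsum_r hsum_r hpos13 (by positivity)
    have hdiff_l : c₁^3 * N ≤ A (u (k+3)) - A (u (k+1)) := by
      have h := mul_le_mul_of_nonneg_left hprod_l (by positivity : (0:ℝ) ≤ c₁/2)
      rw [hfact] at kl
      linarith
    have hdiff_r : A (u (k+3)) - A (u (k+1)) ≤ 4*c₂^2*K*N := by
      have h := mul_le_mul_of_nonneg_left hprod_r (by positivity : (0:ℝ) ≤ c₂/2)
      rw [hfact] at kr
      linarith
    constructor
    · have h := mul_le_mul_of_nonneg_right (min_le_left (c₁^3/2) (c₁^3/(4*c₂*K^2))) hN0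
      linarith
    · have h := mul_le_mul_of_nonneg_right
        (le_trans (le_max_left (2*c₂^2*K) (4*c₂*K^2/c₁^3))
          (le_max_right (c₂*K^2/2) _)) hN0
      linarith
  -- properties of α ∈ V_n
  · intro α hα
    obtain ⟨hαl, hαr⟩ := hα
    refine ⟨⟨?_, ?_⟩, ?_⟩
    · -- C₁ v_n ≤ α
      have h1 : c₁^3/2 * (N-1)^2 ≤ α := by linarith
      have hq : N^2/4 ≤ (N-1)^2 := by
        have := mul_nonneg (by linarith : (0:ℝ) ≤ N-2) (by linarith : (0:ℝ) ≤ 3*N-2)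
        linarith [this]
      have h2 : c₁^3/8 * N^2 ≤ α := by
        have h := mul_le_mul_of_nonneg_left hq (by positivity : (0:ℝ) ≤ c₁^3/2)
        linarith
      have h3 : c₁^3/(4*c₂*K^2) * A (u (k+2)) ≤ α := by
        have hKK : 0 < 4*c₂*K^2 := by positivity
        rw [div_mul_eq_mul_div, div_le_iff₀ hKK]
        have e1 : c₁^3 * A (u (k+2)) ≤ c₁^3 * (c₂*K^2/2*N^2) :=
          mul_le_mul_of_nonneg_left hv2r (by positivity)
        have e2 : (c₁^3/8*N^2) * (4*c₂*K^2) ≤ α * (4*c₂*K^2) :=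
          mul_le_mul_of_nonneg_right h2 (by positivity)
        linarith
      have h := mul_le_mul_of_nonneg_right (min_le_right (c₁^3/2) (c₁^3/(4*c₂*K^2))) hA2
      linarith
    · -- α ≤ C₂ v_n
      have h1 : α ≤ c₂*K^2/2 * (N+1)^2 := by linarith
      have hq : (N+1)^2 ≤ (2*N)^2 := pow_le_pow_left₀ (by linarith) (by linarith) 2
      have h2 : α ≤ 2*c₂*K^2 * N^2 := by
        have h := mul_le_mul_of_nonneg_left hq (by positivity : (0:ℝ) ≤ c₂*K^2/2)
        linarith
      have h3 : α ≤ 4*c₂*K^2/c₁^3 * A (u (k+2)) := by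
        have hcc : (0:ℝ) < c₁^3 := by positivity
        rw [div_mul_eq_mul_div, le_div_iff₀ hcc]
        have e1 : 4*c₂*K^2 * (c₁^3/2 * N^2) ≤ 4*c₂*K^2 * A (u (k+2)) :=
          mul_le_mul_of_nonneg_left hv2l (by positivity)
        have e2 : α * c₁^3 ≤ (2*c₂*K^2 * N^2) * c₁^3 :=
          mul_le_mul_of_nonneg_right h2 (by positivity)
        linarith
      have h4 := le_trans (le_max_right (2*c₂^2*K) (4*c₂*K^2/c₁^3))
        (le_max_right (c₂*K^2/2) _)
      have h := mul_le_mul_of_nonneg_right h4 hA2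
      linarith
    · -- closest point property
      intro m hm
      rcases lt_trichotomy m (k+2) with hcase | hcase | hcase
      · have hm1 : m ≤ k + 1 := by omega
        have hmm := hvmono m (k+1) hm hm1
        have hmn := hvmono m (k+2) hm (by omega)
        have habs : |A (u m) - α| = α - A (u m) := by
          rw [abs_sub_comm]; exact abs_of_nonneg (by linarith)
        rw [habs]
        exact abs_le.mpr ⟨by linarith, by linarith⟩
      · subst hcase; exact le_refl _
      · have hm3 : k + 3 ≤ m := by omega
        have hmm := hvmono (k+3) m hk3 hm3
        have hmn := hvmono (k+2) m hk2 (by omega)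
        have habs : |A (u m) - α| = A (u m) - α := abs_of_nonneg (by linarith)
        rw [habs]
        exact abs_le.mpr ⟨by linarith, by linarith⟩
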